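/- (Lemma on the torsion term t, part (i).) For every λ > 0, every Z ∈ m, and every X that lies either in ι(n) or in p, one has g_λ(π_m([Z,X]), X) = 0, where π_m : so(5) → m is the linear projection onto m along ι(u) coming from the decomposition so(5) = ι(u) ⊕ m. -/

import Mathlib

open Matrix

attribute [local instance 100] LieRing.ofAssociativeRing

def Pmat : Matrix (Fin 4) (Fin 4) ℝ :=
  !![0, -1, 0, 0; 1, 0, 0, 0; 0, 0, 0, -1; 0, 0, 1, 0]

/-- The stabilizer subalgebra `u = {A ∈ so(4) : AP = PA}`. -/
def uSub : Submodule ℝ (Matrix (Fin 4) (Fin 4) ℝ) where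
  carrier := {A | Aᵀ = -A ∧ A * Pmat = Pmat * A}
  add_mem' := by
    rintro a b ⟨ha1, ha2⟩ ⟨hb1, hb2⟩
    exact ⟨by rw [Matrix.transpose_add, ha1, hb1, neg_add],
      by rw [add_mul, mul_add, ha2, hb2]⟩
  zero_mem' := ⟨by simp, by simp⟩
  smul_mem' := by
    rintro c a ⟨h1, h2⟩
    exact ⟨by rw [Matrix.transpose_smul, h1, smul_neg],
      by rw [Matrix.smul_mul, Matrix.mul_smul, h2]⟩

/-- The complement `n = {A ∈ so(4) : AP = −PA}`. -/
def nSub : Submodule ℝ (Matrix (Fin 4) (Fin 4) ℝ) where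
  carrier := {A | Aᵀ = -A ∧ A * Pmat = -(Pmat * A)}
  add_mem' := by
    rintro a b ⟨ha1, ha2⟩ ⟨hb1, hb2⟩
    exact ⟨by rw [Matrix.transpose_add, ha1, hb1, neg_add],
      by rw [add_mul, mul_add, ha2, hb2, neg_add]⟩
  zero_mem' := ⟨by simp, by simp⟩
  smul_mem' := by
    rintro c a ⟨h1, h2⟩
    exact ⟨by rw [Matrix.transpose_smul, h1, smul_neg],
      by rw [Matrix.smul_mul, Matrix.mul_smul, h2, smul_neg]⟩

/-- The embedding `ι : M₄(ℝ) → M₅(ℝ)` sending `A` to the block-diagonal matrix with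
upper-left block `A` and last row and column zero. -/
noncomputable def ι4 : Matrix (Fin 4) (Fin 4) ℝ →ₗ[ℝ] Matrix (Fin 5) (Fin 5) ℝ where
  toFun A := Matrix.reindexLinearEquiv ℝ ℝ finSumFinEquiv finSumFinEquiv
    (Matrix.fromBlocks A 0 0 (0 : Matrix (Fin 1) (Fin 1) ℝ))
  map_add' A B := by
    rw [← map_add]
    refine congrArg _ ?_
    rw [Matrix.fromBlocks_add]
    simp
  map_smul' c A := by
    dsimp only [RingHom.id_apply]
    rw [← _root_.map_smul (Matrix.reindexLinearEquiv ℝ ℝ finSumFinEquiv finSumFinEquiv)]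
    refine congrArg _ ?_
    rw [Matrix.fromBlocks_smul]
    simp

/-- `so(5)` as a submodule of the 5×5 real matrices. -/
def so5 : Submodule ℝ (Matrix (Fin 5) (Fin 5) ℝ) where
  carrier := {X | Xᵀ = -X}
  add_mem' := by
    intro a b ha hb
    simp only [Set.mem_setOf_eq] at *
    rw [Matrix.transpose_add, ha, hb, neg_add]
  zero_mem' := by simp
  smul_mem' := by
    intro c a ha
    simp only [Set.mem_setOf_eq] at *
    rw [Matrix.transpose_smul, ha, smul_neg]

/-- `so(5)` as a Lie subalgebra of the 5×5 real matrices, with the commutator bracket. -/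
def so5Alg : LieSubalgebra ℝ (Matrix (Fin 5) (Fin 5) ℝ) :=
  { so5 with
    lie_mem' := by
      intro x y hx hy
      simp only [so5, Set.mem_setOf_eq] at *
      rw [Ring.lie_def, Matrix.transpose_sub, Matrix.transpose_mul, Matrix.transpose_mul,
        hx, hy]
      noncomm_ring }

/-- The Cartan complement `p = {X ∈ so(5) : X_{ij} = 0 for i,j ≤ 4}`. -/
def pSub : Submodule ℝ (Matrix (Fin 5) (Fin 5) ℝ) where
  carrier := {X | Xᵀ = -X ∧ ∀ i j : Fin 5, (i : ℕ) < 4 → (j : ℕ) < 4 → X i j = 0}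
  add_mem' := by
    rintro a b ⟨ha1, ha2⟩ ⟨hb1, hb2⟩
    refine ⟨by rw [Matrix.transpose_add, ha1, hb1, neg_add], fun i j hi hj => ?_⟩
    simp [Matrix.add_apply, ha2 i j hi hj, hb2 i j hi hj]
  zero_mem' := ⟨by simp, fun i j _ _ => rfl⟩
  smul_mem' := by
    rintro c a ⟨h1, h2⟩
    refine ⟨by rw [Matrix.transpose_smul, h1, smul_neg], fun i j hi hj => ?_⟩
    simp [Matrix.smul_apply, h2 i j hi hj]

/-- `m = ι(n) ⊕ p` inside `so(5)`. -/
noncomputable def mSub : Submodule ℝ (Matrix (Fin 5) (Fin 5) ℝ) :=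
  nSub.map ι4 ⊔ pSub
/-- Symmetrization map into `so(5)`; it is the identity on skew-symmetric matrices. -/
noncomputable def toSo5 (X : Matrix (Fin 5) (Fin 5) ℝ) : so5Alg :=
  ⟨(1 / 2 : ℝ) • (X - Xᵀ), by
    show ((1 / 2 : ℝ) • (X - Xᵀ))ᵀ = -((1 / 2 : ℝ) • (X - Xᵀ))
    rw [Matrix.transpose_smul, Matrix.transpose_sub, Matrix.transpose_transpose,
      ← neg_sub X Xᵀ, smul_neg]⟩

/-- The Killing form `κ(X,Y) = tr(ad X ∘ ad Y)` of the Lie algebra `so(5)`, as a function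
of (skew-symmetric) 5×5 matrices. -/
noncomputable def kil (X Y : Matrix (Fin 5) (Fin 5) ℝ) : ℝ :=
  killingForm ℝ ↥so5Alg (toSo5 X) (toSo5 Y)

/-- The upper-left 4×4 block of a 5×5 matrix. -/
def blk (X : Matrix (Fin 5) (Fin 5) ℝ) : Matrix (Fin 4) (Fin 4) ℝ :=
  Matrix.of fun i j => X i.castSucc j.castSucc

/-- The `ι(n)`-component of `X ∈ so(5)`, using the projection `A ↦ (A + PAP)/2` of
`so(4)` onto `n`. -/
noncomputable def nPart (X : Matrix (Fin 5) (Fin 5) ℝ) : Matrix (Fin 5) (Fin 5) ℝ :=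
  ι4 ((1 / 2 : ℝ) • (blk X + Pmat * blk X * Pmat))

/-- The `p`-component of `X ∈ so(5)`. -/
noncomputable def pPart (X : Matrix (Fin 5) (Fin 5) ℝ) : Matrix (Fin 5) (Fin 5) ℝ :=
  X - ι4 (blk X)

/-- The projection `π_m : so(5) → m` along `ι(u)`. -/
noncomputable def mPart (X : Matrix (Fin 5) (Fin 5) ℝ) : Matrix (Fin 5) (Fin 5) ℝ :=
  nPart X + pPart X

/-- The metric `g_λ(X,Y) = −(1/λ²)·κ(X_n,Y_n) − κ(X_p,Y_p)` on `m`. -/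
noncomputable def gl (lam : ℝ) (X Y : Matrix (Fin 5) (Fin 5) ℝ) : ℝ :=
  -(1 / lam ^ 2) * kil (nPart X) (nPart Y) - kil (pPart X) (pPart Y)


section Helpers

lemma Pmat_sq : Pmat * Pmat = -1 := by
  ext i j
  fin_cases i <;> fin_cases j <;>
    simp [Pmat, Matrix.mul_apply, Fin.sum_univ_four, Matrix.one_apply,
      Matrix.neg_apply, Matrix.vecHead, Matrix.vecTail]

lemma ι4_apply (A : Matrix (Fin 4) (Fin 4) ℝ) (i j : Fin 5) :
    ι4 A i j = Matrix.fromBlocks A 0 0 (0 : Matrix (Fin 1) (Fin 1) ℝ)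
      (finSumFinEquiv.symm i) (finSumFinEquiv.symm j) := rfl

lemma ι4_apply_castSucc (A : Matrix (Fin 4) (Fin 4) ℝ) (i j : Fin 4) :
    ι4 A i.castSucc j.castSucc = A i j := by
  have hi : (i.castSucc : Fin 5) = Fin.castAdd 1 i := rfl
  have hj : (j.castSucc : Fin 5) = Fin.castAdd 1 j := rfl
  rw [ι4_apply, hi, hj, finSumFinEquiv_symm_apply_castAdd,
    finSumFinEquiv_symm_apply_castAdd]
  rfl

lemma ι4_apply_last_left (A : Matrix (Fin 4) (Fin 4) ℝ) (j : Fin 5) :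
    ι4 A (Fin.last 4) j = 0 := by
  rw [ι4_apply, finSumFinEquiv_symm_last]
  generalize (@finSumFinEquiv 4 1).symm j = s
  rcases s with j' | j' <;> rfl

lemma ι4_apply_last_right (A : Matrix (Fin 4) (Fin 4) ℝ) (i : Fin 5) :
    ι4 A i (Fin.last 4) = 0 := by
  rw [ι4_apply, finSumFinEquiv_symm_last]
  generalize (@finSumFinEquiv 4 1).symm i = s
  rcases s with i' | i' <;> rfl

lemma blk_ι4 (A : Matrix (Fin 4) (Fin 4) ℝ) : blk (ι4 A) = A := by
  ext i j
  simp [blk, ι4_apply_castSucc]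

lemma blk_add (X Y : Matrix (Fin 5) (Fin 5) ℝ) : blk (X + Y) = blk X + blk Y := by
  ext i j; simp [blk]

lemma blk_sub (X Y : Matrix (Fin 5) (Fin 5) ℝ) : blk (X - Y) = blk X - blk Y := by
  ext i j; simp [blk]

lemma blk_pPart (X : Matrix (Fin 5) (Fin 5) ℝ) : blk (pPart X) = 0 := by
  rw [pPart, blk_sub, blk_ι4, sub_self]

lemma nPart_of_blk (X : Matrix (Fin 5) (Fin 5) ℝ) :
    nPart X = ι4 ((1 / 2 : ℝ) • (blk X + Pmat * blk X * Pmat)) := rfl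

lemma nPart_eq_zero_of_comm (X : Matrix (Fin 5) (Fin 5) ℝ)
    (h : blk X * Pmat = Pmat * blk X) : nPart X = 0 := by
  rw [nPart_of_blk]
  have : Pmat * blk X * Pmat = -blk X := by
    rw [← h, mul_assoc, Pmat_sq, mul_neg_one]
  rw [this, add_neg_cancel, smul_zero, map_zero]

lemma nPart_zero_of_blk_zero (X : Matrix (Fin 5) (Fin 5) ℝ) (h : blk X = 0) :
    nPart X = 0 := by
  rw [nPart_of_blk, h]
  simp

lemma blk_mPart (X : Matrix (Fin 5) (Fin 5) ℝ) :
    blk (mPart X) = (1 / 2 : ℝ) • (blk X + Pmat * blk X * Pmat) := by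
  rw [mPart, blk_add, blk_pPart, add_zero, nPart_of_blk, blk_ι4]

lemma pPart_mPart (X : Matrix (Fin 5) (Fin 5) ℝ) : pPart (mPart X) = pPart X := by
  rw [pPart, blk_mPart, mPart, nPart_of_blk]
  abel

lemma PBP (B : Matrix (Fin 4) (Fin 4) ℝ) :
    Pmat * (Pmat * B * Pmat) * Pmat = B := by
  have h : Pmat * (Pmat * B * Pmat) * Pmat = (Pmat * Pmat) * B * (Pmat * Pmat) := by
    simp only [mul_assoc]
  rw [h, Pmat_sq]
  simp

lemma nPart_mPart (X : Matrix (Fin 5) (Fin 5) ℝ) : nPart (mPart X) = nPart X := by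
  rw [nPart_of_blk, blk_mPart, nPart_of_blk]
  congr 1
  rw [Matrix.mul_smul, Matrix.smul_mul, Matrix.mul_add, Matrix.add_mul, PBP,
    add_comm (Pmat * blk X * Pmat) (blk X), ← add_smul]
  norm_num

end Helpers


lemma ι4_transpose (A : Matrix (Fin 4) (Fin 4) ℝ) : (ι4 A)ᵀ = ι4 Aᵀ := by
  ext i j
  rw [Matrix.transpose_apply]
  refine Fin.lastCases ?_ (fun i' => ?_) i
  · rw [ι4_apply_last_right, ι4_apply_last_left]
  · refine Fin.lastCases ?_ (fun j' => ?_) j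
    · rw [ι4_apply_last_left, ι4_apply_last_right]
    · rw [ι4_apply_castSucc, ι4_apply_castSucc, Matrix.transpose_apply]

lemma ι4_mul (A B : Matrix (Fin 4) (Fin 4) ℝ) : ι4 A * ι4 B = ι4 (A * B) := by
  ext i j
  refine Fin.lastCases ?_ (fun i' => ?_) i
  · rw [ι4_apply_last_left, Matrix.mul_apply]
    exact Finset.sum_eq_zero fun k _ => by rw [ι4_apply_last_left, zero_mul]
  · refine Fin.lastCases ?_ (fun j' => ?_) j
    · rw [ι4_apply_last_right, Matrix.mul_apply]
      exact Finset.sum_eq_zero fun k _ => by rw [ι4_apply_last_right, mul_zero]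
    · rw [ι4_apply_castSucc, Matrix.mul_apply, Matrix.mul_apply,
        Fin.sum_univ_castSucc, ι4_apply_last_left, mul_zero, add_zero]
      exact Finset.sum_congr rfl fun k _ => by
        rw [ι4_apply_castSucc, ι4_apply_castSucc]

lemma blk_mul_ι4 (Q : Matrix (Fin 5) (Fin 5) ℝ) (A : Matrix (Fin 4) (Fin 4) ℝ)
    (hQ : ∀ i j : Fin 5, (i : ℕ) < 4 → (j : ℕ) < 4 → Q i j = 0) :
    blk (Q * ι4 A) = 0 := by
  ext i j
  show (Q * ι4 A) i.castSucc j.castSucc = 0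
  rw [Matrix.mul_apply, Fin.sum_univ_castSucc, ι4_apply_last_left, mul_zero, add_zero]
  exact Finset.sum_eq_zero fun k _ => by
    rw [hQ _ _ (by simpa using i.isLt) (by simpa using k.isLt), zero_mul]

lemma blk_ι4_mul (A : Matrix (Fin 4) (Fin 4) ℝ) (Q : Matrix (Fin 5) (Fin 5) ℝ)
    (hQ : ∀ i j : Fin 5, (i : ℕ) < 4 → (j : ℕ) < 4 → Q i j = 0) :
    blk (ι4 A * Q) = 0 := by
  ext i j
  show (ι4 A * Q) i.castSucc j.castSucc = 0
  rw [Matrix.mul_apply, Fin.sum_univ_castSucc, ι4_apply_last_right, zero_mul, add_zero]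
  exact Finset.sum_eq_zero fun k _ => by
    rw [hQ _ _ (by simpa using k.isLt) (by simpa using j.isLt), mul_zero]

lemma comm_p_eq_ι4 (Q X : Matrix (Fin 5) (Fin 5) ℝ)
    (hQ1 : Qᵀ = -Q) (hQ2 : ∀ i j : Fin 5, (i : ℕ) < 4 → (j : ℕ) < 4 → Q i j = 0)
    (hX1 : Xᵀ = -X) (hX2 : ∀ i j : Fin 5, (i : ℕ) < 4 → (j : ℕ) < 4 → X i j = 0) :
    Q * X - X * Q = ι4 (blk (Q * X - X * Q)) := by
  have hQs : ∀ i j, Q j i = -(Q i j) := fun i j => by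
    have := congrFun (congrFun hQ1 i) j
    simpa [Matrix.transpose_apply] using this
  have hXs : ∀ i j, X j i = -(X i j) := fun i j => by
    have := congrFun (congrFun hX1 i) j
    simpa [Matrix.transpose_apply] using this
  have hQd : ∀ i, Q i i = 0 := fun i => by have := hQs i i; linarith
  have hXd : ∀ i, X i i = 0 := fun i => by have := hXs i i; linarith
  ext i j
  refine Fin.lastCases ?_ (fun i' => ?_) i
  · refine Fin.lastCases ?_ (fun j' => ?_) j
    · rw [ι4_apply_last_left, Matrix.sub_apply, Matrix.mul_apply, Matrix.mul_apply,
        ← Finset.sum_sub_distrib]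
      refine Finset.sum_eq_zero fun k _ => ?_
      rw [hXs (Fin.last 4) k, hQs (Fin.last 4) k]
      ring
    · rw [ι4_apply_last_left, Matrix.sub_apply, Matrix.mul_apply, Matrix.mul_apply,
        ← Finset.sum_sub_distrib]
      refine Finset.sum_eq_zero fun k _ => ?_
      refine Fin.lastCases ?_ (fun k' => ?_) k
      · rw [hQd, hXd]
        ring
      · rw [hX2 k'.castSucc j'.castSucc (by simpa using k'.isLt) (by simpa using j'.isLt),
          hQ2 k'.castSucc j'.castSucc (by simpa using k'.isLt) (by simpa using j'.isLt)]
        ring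
  · refine Fin.lastCases ?_ (fun j' => ?_) j
    · rw [ι4_apply_last_right, Matrix.sub_apply, Matrix.mul_apply, Matrix.mul_apply,
        ← Finset.sum_sub_distrib]
      refine Finset.sum_eq_zero fun k _ => ?_
      refine Fin.lastCases ?_ (fun k' => ?_) k
      · rw [hQd, hXd]
        ring
      · rw [hQ2 i'.castSucc k'.castSucc (by simpa using i'.isLt) (by simpa using k'.isLt),
          hX2 i'.castSucc k'.castSucc (by simpa using i'.isLt) (by simpa using k'.isLt)]
        ring
    · rw [ι4_apply_castSucc]
      rfl

lemma so5_mem (Y : Matrix (Fin 5) (Fin 5) ℝ) (hY : Yᵀ = -Y) : Y ∈ so5Alg := hY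

lemma toSo5_coe (Y : Matrix (Fin 5) (Fin 5) ℝ) (hY : Yᵀ = -Y) :
    (toSo5 Y : Matrix (Fin 5) (Fin 5) ℝ) = Y := by
  show (1 / 2 : ℝ) • (Y - Yᵀ) = Y
  rw [hY, sub_neg_eq_add, ← two_smul ℝ Y, smul_smul]
  norm_num

lemma toSo5_zero : toSo5 (0 : Matrix (Fin 5) (Fin 5) ℝ) = 0 := by
  apply Subtype.ext
  show (1 / 2 : ℝ) • ((0 : Matrix (Fin 5) (Fin 5) ℝ) - 0ᵀ) = 0
  simp

lemma kil_zero_left (Y : Matrix (Fin 5) (Fin 5) ℝ) : kil 0 Y = 0 := by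
  rw [kil, toSo5_zero]
  simp

lemma kil_zero_right (X : Matrix (Fin 5) (Fin 5) ℝ) : kil X 0 = 0 := by
  rw [kil, toSo5_zero]
  simp

lemma kil_bracket (N X : Matrix (Fin 5) (Fin 5) ℝ) (hN : Nᵀ = -N) (hX : Xᵀ = -X) :
    kil (N * X - X * N) X = 0 := by
  set n : so5Alg := ⟨N, so5_mem N hN⟩ with hn
  set x : so5Alg := ⟨X, so5_mem X hX⟩ with hx
  have hskew : (N * X - X * N)ᵀ = -(N * X - X * N) := by
    rw [Matrix.transpose_sub, Matrix.transpose_mul, Matrix.transpose_mul, hN, hX]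
    noncomm_ring
  have h1 : toSo5 (N * X - X * N) = ⁅n, x⁆ := by
    apply Subtype.ext
    rw [toSo5_coe _ hskew]
    rfl
  have h2 : toSo5 X = x := Subtype.ext (toSo5_coe X hX)
  rw [kil, h1, h2, LieModule.traceForm_apply_lie_apply, lie_self]
  simp

/-- Lemma on the torsion term `t`, part (i): for `λ > 0`, `Z ∈ m` and `X ∈ ι(n)` or
`X ∈ p`, one has `g_λ(π_m([Z,X]), X) = 0`. -/
theorem torsion_term_vanishes (lam : ℝ) (hlam : 0 < lam)
    (Z X : Matrix (Fin 5) (Fin 5) ℝ) (hZ : Z ∈ mSub)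
    (hX : X ∈ nSub.map ι4 ∨ X ∈ pSub) :
    gl lam (mPart (Z * X - X * Z)) X = 0 := by
  have hZ' : Z ∈ nSub.map ι4 ⊔ pSub := hZ
  obtain ⟨Y, hY, Q, hQm, rfl⟩ := Submodule.mem_sup.mp hZ'
  obtain ⟨A', hA'm, rfl⟩ := hY
  obtain ⟨hA'1, hA'2⟩ := hA'm
  obtain ⟨hQ1, hQ2⟩ := hQm
  rcases hX with ⟨A, hAm, rfl⟩ | hXp
  · -- X = ι4 A with A ∈ n
    obtain ⟨hA1, hA2⟩ := hAm
    have hW : (ι4 A' + Q) * ι4 A - ι4 A * (ι4 A' + Q)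
        = ι4 (A' * A - A * A') + (Q * ι4 A - ι4 A * Q) := by
      rw [map_sub, ← ι4_mul, ← ι4_mul]
      noncomm_ring
    have hblkW : blk ((ι4 A' + Q) * ι4 A - ι4 A * (ι4 A' + Q)) = A' * A - A * A' := by
      rw [hW, blk_add, blk_ι4, blk_sub, blk_mul_ι4 Q A hQ2, blk_ι4_mul A Q hQ2,
        sub_zero, add_zero]
    have e1 : A * Pmat + Pmat * A = 0 := by rw [hA2]; exact neg_add_cancel _
    have e2 : A' * Pmat + Pmat * A' = 0 := by rw [hA'2]; exact neg_add_cancel _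
    have key : (A' * A - A * A') * Pmat - Pmat * (A' * A - A * A')
        = A' * (A * Pmat + Pmat * A) - (A' * Pmat + Pmat * A') * A
          - A * (A' * Pmat + Pmat * A') + (A * Pmat + Pmat * A) * A' := by
      noncomm_ring
    rw [e1, e2] at key
    simp only [Matrix.mul_zero, Matrix.zero_mul, sub_zero, zero_sub, neg_zero,
      add_zero, zero_add] at key
    have hn0 : nPart ((ι4 A' + Q) * ι4 A - ι4 A * (ι4 A' + Q)) = 0 := by
      refine nPart_eq_zero_of_comm _ ?_
      rw [hblkW]
      exact sub_eq_zero.mp key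
    have hpX : pPart (ι4 A) = 0 := by rw [pPart, blk_ι4, sub_self]
    rw [gl, nPart_mPart, hn0, pPart_mPart, hpX, kil_zero_left, kil_zero_right]
    ring
  · -- X ∈ p
    obtain ⟨hX1, hX2⟩ := hXp
    have hblkX : blk X = 0 := by
      ext i j
      exact hX2 _ _ (by simpa using i.isLt) (by simpa using j.isLt)
    have hnX : nPart X = 0 := nPart_zero_of_blk_zero X hblkX
    have hpX : pPart X = X := by rw [pPart, hblkX, map_zero, sub_zero]
    have hsplit : (ι4 A' + Q) * X - X * (ι4 A' + Q)
        = (ι4 A' * X - X * ι4 A') + (Q * X - X * Q) := by noncomm_ring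
    have hblk1 : blk (ι4 A' * X - X * ι4 A') = 0 := by
      rw [blk_sub, blk_ι4_mul A' X hX2, blk_mul_ι4 X A' hX2, sub_zero]
    have hQX : Q * X - X * Q = ι4 (blk (Q * X - X * Q)) :=
      comm_p_eq_ι4 Q X hQ1 hQ2 hX1 hX2
    have hp : pPart ((ι4 A' + Q) * X - X * (ι4 A' + Q)) = ι4 A' * X - X * ι4 A' := by
      rw [pPart, hsplit, blk_add, hblk1, zero_add, ← hQX]
      abel
    have hN : (ι4 A')ᵀ = -(ι4 A') := by rw [ι4_transpose, hA'1, map_neg]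
    rw [gl, nPart_mPart, hnX, pPart_mPart, hp, hpX, kil_zero_right,
      kil_bracket _ _ hN hX1]
    ring
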